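/- For all integers 2 < s ≤ t, wsat(s+t+2, K_{s,t}) ≥ C(s+t+2, 2) − 4(s+t) + 1. -/

import Mathlib

set_option linter.unusedSectionVars false
set_option linter.unusedVariables false


open SimpleGraph

/-- `G` contains a copy of `F`. -/
def ContainsCopy {W V : Type*} (F : SimpleGraph W) (G : SimpleGraph V) : Prop :=
  ∃ f : W ↪ V, ∀ a b, F.Adj a b → G.Adj (f a) (f b)

/-- One step of the weak saturation process: add one missing edge `e` so that the new
graph contains a copy of `F` through `e`. -/
def AddStep {W V : Type*} (F : SimpleGraph W) (G G' : SimpleGraph V) : Prop :=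
  ∃ e, e ∉ G.edgeSet ∧ G'.edgeSet = insert e G.edgeSet ∧
    ∃ f : W ↪ V, (∀ a b, F.Adj a b → G'.Adj (f a) (f b)) ∧
      ∃ a b, F.Adj a b ∧ s(f a, f b) = e

/-- `G` is weakly `F`-saturated. -/
def IsWeaklySaturated {W V : Type*} (F : SimpleGraph W) (G : SimpleGraph V) : Prop :=
  ¬ ContainsCopy F G ∧
  ∃ (m : ℕ) (c : ℕ → SimpleGraph V), c 0 = G ∧ c m = ⊤ ∧
    ∀ i < m, AddStep F (c i) (c (i + 1))

/-- The weak saturation number `wsat(n, F)`. -/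
noncomputable def wsat {W : Type*} (n : ℕ) (F : SimpleGraph W) : ℕ :=
  sInf {m | ∃ G : SimpleGraph (Fin n), IsWeaklySaturated F G ∧ G.edgeSet.ncard = m}


namespace WsatAux

section LinAlg

variable {N : ℕ} [NeZero N]

def xq (v : Fin N) : ℚ := v.val

lemma xq_inj : Function.Injective (xq (N:=N)) := by
  intro a b h
  have : (a.val : ℚ) = b.val := h
  exact Fin.ext (by exact_mod_cast this)

def chi (p : Sym2 (Fin N)) : Sym2 (Fin N) → ℚ := Pi.single p 1

@[simp] lemma chi_same (p : Sym2 (Fin N)) : chi p p = 1 := Pi.single_eq_same p 1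

lemma chi_ne {p q : Sym2 (Fin N)} (h : q ≠ p) : chi p q = 0 := Pi.single_eq_of_ne h 1

def dfun (j : Fin N) (r : ℕ) : Sym2 (Fin N) → ℚ :=
  Sym2.lift ⟨fun i k => (if k = j then xq j * xq i ^ r - xq i ^ (r+1) else 0)
                      + (if i = j then xq j * xq k ^ r - xq k ^ (r+1) else 0),
             fun i k => add_comm _ _⟩

@[simp] lemma dfun_mk (j : Fin N) (r : ℕ) (i k : Fin N) :
    dfun j r s(i,k) = (if k = j then xq j * xq i ^ r - xq i ^ (r+1) else 0)
                      + (if i = j then xq j * xq k ^ r - xq k ^ (r+1) else 0) := rfl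

lemma sum_dfun_zero : (∑ j : Fin N, dfun j 0) = 0 := by
  funext e
  induction e using Sym2.ind with
  | _ i k =>
    simp only [Finset.sum_apply, dfun_mk, Pi.zero_apply, pow_zero, pow_one, mul_one, zero_add]
    rw [Finset.sum_add_distrib,
      Finset.sum_ite_eq Finset.univ k (fun j => xq j - xq i),
      Finset.sum_ite_eq Finset.univ i (fun j => xq j - xq k)]
    simp only [Finset.mem_univ, if_true]
    ring

/-- the distinguished zero vertex -/
def v0 : Fin N := ⟨0, NeZero.pos N⟩

/-- the generating finset: all `dfun j r` for `r < 3` except `(v0, 0)`, plus diagonal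
basis vectors. -/
noncomputable def genF (N : ℕ) [NeZero N] : Finset (Sym2 (Fin N) → ℚ) :=
  ((Finset.univ : Finset (Fin N × Fin 3)).erase (v0, 0)).image (fun p => dfun p.1 p.2.val) ∪
    Finset.univ.image (fun v : Fin N => chi s(v,v))

noncomputable def USub (N : ℕ) [NeZero N] : Submodule ℚ (Sym2 (Fin N) → ℚ) :=
  Submodule.span ℚ (genF N : Set (Sym2 (Fin N) → ℚ))

lemma card_genF : (genF N).card ≤ 3 * N - 1 + N := by
  classical
  calc (genF N).card ≤ _ + _ := Finset.card_union_le _ _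
    _ ≤ 3 * N - 1 + N := by
        gcongr
        · calc _ ≤ ((Finset.univ : Finset (Fin N × Fin 3)).erase (v0, 0)).card :=
              Finset.card_image_le
            _ = 3 * N - 1 := by
              rw [Finset.card_erase_of_mem (Finset.mem_univ _)]
              simp [Fintype.card_prod]
              omega
        · calc _ ≤ (Finset.univ : Finset (Fin N)).card := Finset.card_image_le
            _ = N := by simp

lemma dfun_mem_USub (j : Fin N) (r : ℕ) (hr : r < 3) : dfun j r ∈ USub N := by
  classical
  by_cases h : (j, (⟨r, hr⟩ : Fin 3)) = ((v0 : Fin N), (0 : Fin 3))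
  · -- dfun v0 0 = - ∑ over erase
    have hj : j = v0 := congrArg Prod.fst h
    have hr0 : r = 0 := by
      have := congrArg (fun p : Fin N × Fin 3 => p.2.val) h
      simpa using this
    subst hj; subst hr0
    have h1 : dfun (v0 : Fin N) 0 + ∑ p ∈ (Finset.univ : Finset (Fin N)).erase v0, dfun p 0 = 0 := by
      rw [Finset.add_sum_erase Finset.univ (fun p => dfun p 0) (Finset.mem_univ v0)]
      exact sum_dfun_zero
    have hsum : dfun (v0 : Fin N) 0 = - ∑ p ∈ (Finset.univ : Finset (Fin N)).erase v0, dfun p 0 :=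
      eq_neg_of_add_eq_zero_left h1
    rw [hsum]
    apply Submodule.neg_mem
    apply Submodule.sum_mem
    intro j hj
    apply Submodule.subset_span
    simp only [genF, Finset.coe_union, Set.mem_union]
    left
    simp only [Finset.coe_image, Set.mem_image]
    refine ⟨(j, 0), ?_, rfl⟩
    simp only [Finset.mem_coe, Finset.mem_erase, Finset.mem_univ, and_true]
    intro hc
    exact (Finset.mem_erase.mp hj).1 (congrArg Prod.fst hc)
  · apply Submodule.subset_span
    simp only [genF, Finset.coe_union, Set.mem_union]
    left
    simp only [Finset.coe_image, Set.mem_image]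
    exact ⟨(j, ⟨r, hr⟩), by simpa using h, rfl⟩

def gg (z1 z2 v : Fin N) : ℚ := (xq v - xq z1) * (xq v - xq z2)

noncomputable def uu (Bf : Finset (Fin N)) (z1 z2 : Fin N) : Sym2 (Fin N) → ℚ :=
  ∑ j ∈ Bf, gg z1 z2 j • ((xq z1 * xq z2) • dfun j 0 - (xq z1 + xq z2) • dfun j 1 + dfun j 2)

lemma uu_mem (Bf : Finset (Fin N)) (z1 z2 : Fin N) : uu Bf z1 z2 ∈ USub N := by
  apply Submodule.sum_mem
  intro j hj
  apply Submodule.smul_mem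
  apply Submodule.add_mem
  · apply Submodule.sub_mem
    · exact Submodule.smul_mem _ _ (dfun_mem_USub j 0 (by omega))
    · exact Submodule.smul_mem _ _ (dfun_mem_USub j 1 (by omega))
  · exact dfun_mem_USub j 2 (by omega)

lemma uu_val (Bf : Finset (Fin N)) (z1 z2 : Fin N) (i k : Fin N) :
    uu Bf z1 z2 s(i,k) =
      (if k ∈ Bf then gg z1 z2 k * (gg z1 z2 i * (xq k - xq i)) else 0)
      + (if i ∈ Bf then gg z1 z2 i * (gg z1 z2 k * (xq i - xq k)) else 0) := by
  classical
  have hpt : ∀ j ∈ Bf,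
      (gg z1 z2 j • ((xq z1 * xq z2) • dfun j 0 - (xq z1 + xq z2) • dfun j 1 + dfun j 2)) s(i,k)
      = (if k = j then gg z1 z2 j * (gg z1 z2 i * (xq j - xq i)) else 0)
      + (if i = j then gg z1 z2 j * (gg z1 z2 k * (xq j - xq k)) else 0) := by
    intro j hj
    simp only [Pi.smul_apply, Pi.add_apply, Pi.sub_apply, smul_eq_mul, dfun_mk, gg]
    split_ifs <;> subst_vars <;> ring
  rw [uu, Finset.sum_apply, Finset.sum_congr rfl hpt, Finset.sum_add_distrib,
    Finset.sum_ite_eq Bf k (fun j => gg z1 z2 j * (gg z1 z2 i * (xq j - xq i))),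
    Finset.sum_ite_eq Bf i (fun j => gg z1 z2 j * (gg z1 z2 k * (xq j - xq k)))]

lemma mem_span_singles {S : Set (Sym2 (Fin N))} (v : Sym2 (Fin N) → ℚ)
    (hv : ∀ p, v p ≠ 0 → p ∈ S) :
    v ∈ Submodule.span ℚ ((fun p => chi p) '' S) := by
  classical
  have hv' : v = ∑ p : Sym2 (Fin N), v p • chi p := by
    funext q
    rw [Finset.sum_apply]
    have : ∀ p ∈ (Finset.univ : Finset (Sym2 (Fin N))),
        (v p • chi p) q = if q = p then v p else 0 := by
      intro p _
      by_cases h : q = p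
      · subst h; simp
      · simp [chi_ne h, h]
    rw [Finset.sum_congr rfl this, Finset.sum_ite_eq Finset.univ q v]
    simp
  rw [hv']
  apply Submodule.sum_mem
  intro p _
  by_cases h : v p = 0
  · simp [h]
  · exact Submodule.smul_mem _ _ (Submodule.subset_span ⟨p, hv p h, rfl⟩)

lemma key_step {s t : ℕ} (hN : N = s + t + 2)
    (H H' : SimpleGraph (Fin N)) (e : Sym2 (Fin N))
    (hE : H'.edgeSet = insert e H.edgeSet)
    (f : (Fin s ⊕ Fin t) ↪ Fin N)
    (hf : ∀ a b, (completeBipartiteGraph (Fin s) (Fin t)).Adj a b → H'.Adj (f a) (f b))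
    (a b : Fin s ⊕ Fin t) (hab : (completeBipartiteGraph (Fin s) (Fin t)).Adj a b)
    (he : s(f a, f b) = e) :
    chi e ∈ USub N ⊔ Submodule.span ℚ ((fun p => chi p) '' H.edgeSet) := by
  classical
  obtain ⟨x0, y0, he'⟩ : ∃ x : Fin s, ∃ y : Fin t, s(f (Sum.inl x), f (Sum.inr y)) = e := by
    cases a with
    | inl x =>
      cases b with
      | inl x' => simp [completeBipartiteGraph] at hab
      | inr y => exact ⟨x, y, he⟩
    | inr y =>
      cases b with
      | inl x => exact ⟨x, y, by rw [Sym2.eq_swap]; exact he⟩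
      | inr y' => simp [completeBipartiteGraph] at hab
  clear he hab
  set Af := Finset.image (fun x : Fin s => f (Sum.inl x)) Finset.univ with hAf
  set Bf := Finset.image (fun y : Fin t => f (Sum.inr y)) Finset.univ with hBf
  have hABdisj : ∀ v, v ∈ Af → v ∈ Bf → False := by
    intro v hvA hvB
    obtain ⟨x, -, hx⟩ := Finset.mem_image.mp hvA
    obtain ⟨y, -, hy⟩ := Finset.mem_image.mp hvB
    exact Sum.inl_ne_inr (f.injective (hx.trans hy.symm))
  have hAcard : Af.card = s := by
    rw [hAf, Finset.card_image_of_injective _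
      (fun x x' h => Sum.inl_injective (f.injective h) : Function.Injective (fun x : Fin s => f (Sum.inl x)))]
    simp
  have hBcard : Bf.card = t := by
    rw [hBf, Finset.card_image_of_injective _
      (fun y y' h => Sum.inr_injective (f.injective h) : Function.Injective (fun y : Fin t => f (Sum.inr y)))]
    simp
  have hPcard : ((Af ∪ Bf)ᶜ).card = 2 := by
    rw [Finset.card_compl, Finset.card_union_of_disjoint
      (Finset.disjoint_left.mpr (fun v hv hv' => hABdisj v hv hv')), hAcard, hBcard]
    simp only [Fintype.card_fin]
    omega
  obtain ⟨z1, z2, hz12ne, hzeq⟩ := Finset.card_eq_two.mp hPcard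
  have htri : ∀ v, v ∉ Af → v ∉ Bf → v = z1 ∨ v = z2 := by
    intro v h1 h2
    have : v ∈ (Af ∪ Bf)ᶜ := by
      rw [Finset.mem_compl, Finset.mem_union]
      tauto
    rw [hzeq] at this
    simpa using this
  have hz1 : z1 ∉ Af ∧ z1 ∉ Bf := by
    have : z1 ∈ (Af ∪ Bf)ᶜ := by rw [hzeq]; simp
    rw [Finset.mem_compl, Finset.mem_union] at this
    tauto
  have hz2 : z2 ∉ Af ∧ z2 ∉ Bf := by
    have : z2 ∈ (Af ∪ Bf)ᶜ := by rw [hzeq]; simp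
    rw [Finset.mem_compl, Finset.mem_union] at this
    tauto
  have hgg0 : ∀ v, v ≠ z1 → v ≠ z2 → gg z1 z2 v ≠ 0 := by
    intro v h1 h2
    exact mul_ne_zero (sub_ne_zero.mpr (fun hc => h1 (xq_inj hc)))
      (sub_ne_zero.mpr (fun hc => h2 (xq_inj hc)))
  have hggB : ∀ v, v ∈ Bf → gg z1 z2 v ≠ 0 := by
    intro v hv
    exact hgg0 v (fun hc => hz1.2 (hc ▸ hv)) (fun hc => hz2.2 (hc ▸ hv))
  have hggA : ∀ v, v ∈ Af → gg z1 z2 v ≠ 0 := by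
    intro v hv
    exact hgg0 v (fun hc => hz1.1 (hc ▸ hv)) (fun hc => hz2.1 (hc ▸ hv))
  have hcross : ∀ i k, i ∈ Af → k ∈ Bf →
      uu Bf z1 z2 s(i,k) = gg z1 z2 k * (gg z1 z2 i * (xq k - xq i)) := by
    intro i k hi hk
    rw [uu_val, if_pos hk, if_neg (fun hc => hABdisj i hi hc), add_zero]
  have hcross_ne : ∀ i k, i ∈ Af → k ∈ Bf → uu Bf z1 z2 s(i,k) ≠ 0 := by
    intro i k hi hk
    rw [hcross i k hi hk]
    have hik : k ≠ i := fun hc => hABdisj i hi (hc ▸ hk)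
    exact mul_ne_zero (hggB k hk) (mul_ne_zero (hggA i hi)
      (sub_ne_zero.mpr (fun hc => hik (xq_inj hc))))
  have hsupp : ∀ p, uu Bf z1 z2 p ≠ 0 →
      ∃ x y, p = s(f (Sum.inl x), f (Sum.inr y)) := by
    intro p
    induction p using Sym2.ind with
    | _ i k =>
      intro hp
      rw [uu_val] at hp
      have hgz1 : gg z1 z2 z1 = 0 := by simp [gg]
      have hgz2 : gg z1 z2 z2 = 0 := by simp [gg]
      by_cases hkB : k ∈ Bf <;> by_cases hiB : i ∈ Bf
      · exfalso; apply hp; rw [if_pos hkB, if_pos hiB]; ring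
      · have hiA : i ∈ Af := by
          by_contra hiA
          rcases htri i hiA hiB with h | h <;>
            (apply hp; rw [if_pos hkB, if_neg hiB, add_zero, h]) <;> simp [hgz1, hgz2]
        obtain ⟨x, -, hx⟩ := Finset.mem_image.mp hiA
        obtain ⟨y, -, hy⟩ := Finset.mem_image.mp hkB
        exact ⟨x, y, by rw [hx, hy]⟩
      · have hkA : k ∈ Af := by
          by_contra hkA
          rcases htri k hkA hkB with h | h <;>
            (apply hp; rw [if_neg hkB, if_pos hiB, zero_add, h]) <;> simp [hgz1, hgz2]
        obtain ⟨x, -, hx⟩ := Finset.mem_image.mp hkA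
        obtain ⟨y, -, hy⟩ := Finset.mem_image.mp hiB
        exact ⟨x, y, by rw [hx, hy, Sym2.eq_swap]⟩
      · exfalso; apply hp; rw [if_neg hkB, if_neg hiB, add_zero]
  -- assemble
  have hx0A : f (Sum.inl x0) ∈ Af := Finset.mem_image_of_mem _ (Finset.mem_univ x0)
  have hy0B : f (Sum.inr y0) ∈ Bf := Finset.mem_image_of_mem _ (Finset.mem_univ y0)
  have hc0 : uu Bf z1 z2 e ≠ 0 := by
    rw [← he']
    exact hcross_ne _ _ hx0A hy0B
  set w := uu Bf z1 z2 - (uu Bf z1 z2 e) • chi e with hwdef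
  have hw_supp : ∀ p, w p ≠ 0 → p ∈ H.edgeSet := by
    intro p hp
    by_cases hpe : p = e
    · exfalso
      apply hp
      rw [hwdef]
      subst hpe
      simp [chi]
    · have hup : uu Bf z1 z2 p ≠ 0 := by
        intro hc
        apply hp
        rw [hwdef]
        simp [chi_ne hpe, hc]
      obtain ⟨x, y, hxy⟩ := hsupp p hup
      have hadj : H'.Adj (f (Sum.inl x)) (f (Sum.inr y)) := by
        apply hf
        simp [completeBipartiteGraph]
      have : p ∈ H'.edgeSet := by rw [hxy]; exact hadj
      rw [hE] at this
      rcases this with h | h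
      · exact absurd h hpe
      · exact h
  have hw_mem : w ∈ Submodule.span ℚ ((fun p => chi p) '' H.edgeSet) :=
    mem_span_singles w hw_supp
  have hkey : chi e = (uu Bf z1 z2 e)⁻¹ • (uu Bf z1 z2 - w) := by
    rw [hwdef, sub_sub_cancel, inv_smul_smul₀ hc0]
  rw [hkey]
  apply Submodule.smul_mem
  exact Submodule.sub_mem _ (Submodule.mem_sup_left (uu_mem Bf z1 z2))
    (Submodule.mem_sup_right hw_mem)

lemma USub_def' (N : ℕ) [NeZero N] : USub N = Submodule.span ℚ (genF N : Set (Sym2 (Fin N) → ℚ)) := rfl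

lemma chi_diag_mem (v : Fin N) : chi s(v,v) ∈ USub N := by
  apply Submodule.subset_span
  simp only [genF, Finset.coe_union, Set.mem_union, Finset.coe_image, Set.mem_image]
  right
  exact ⟨v, by simp, rfl⟩

lemma member_bound {s t : ℕ} (hN : N = s + t + 2)
    (G : SimpleGraph (Fin N))
    (hproc : ∃ (m : ℕ) (c : ℕ → SimpleGraph (Fin N)), c 0 = G ∧ c m = ⊤ ∧
      ∀ i < m, AddStep (completeBipartiteGraph (Fin s) (Fin t)) (c i) (c (i+1))) :
    N.choose 2 ≤ G.edgeSet.ncard + (3 * N - 1) := by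
  classical
  obtain ⟨m, c, h0, hm, hstep⟩ := hproc
  set Espan : SimpleGraph (Fin N) → Submodule ℚ (Sym2 (Fin N) → ℚ) :=
    fun H => USub N ⊔ Submodule.span ℚ ((fun p => chi p) '' H.edgeSet) with hEspan
  have hmono : ∀ i ≤ m, Espan (c i) ≤ Espan G := by
    intro i
    induction i with
    | zero => intro _; rw [h0]
    | succ i ih =>
      intro him
      have hi : i < m := by omega
      refine le_trans ?_ (ih (by omega))
      obtain ⟨e, heG, hE, f, hf, a, b, hab, hefab⟩ := hstep i hi
      apply sup_le le_sup_left
      rw [Submodule.span_le]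
      rintro v ⟨p, hp, rfl⟩
      rw [hE] at hp
      rcases hp with rfl | hp
      · exact key_step hN (c i) (c (i+1)) p hE f hf a b hab hefab
      · exact Submodule.mem_sup_right (Submodule.subset_span ⟨p, hp, rfl⟩)
  have htop : (⊤ : Submodule ℚ (Sym2 (Fin N) → ℚ)) ≤ Espan (c m) := by
    intro v _
    have hv : v ∈ Submodule.span ℚ ((fun p => chi p) '' (Set.univ : Set (Sym2 (Fin N)))) :=
      mem_span_singles v (fun p _ => Set.mem_univ p)
    refine Submodule.span_le.mpr ?_ hv
    rintro w ⟨p, -, rfl⟩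
    induction p using Sym2.ind with
    | _ i k =>
      by_cases hik : i = k
      · subst hik
        exact Submodule.mem_sup_left (chi_diag_mem i)
      · apply Submodule.mem_sup_right
        apply Submodule.subset_span
        refine ⟨s(i,k), ?_, rfl⟩
        rw [hm]
        exact hik
  have hfull : Espan G = ⊤ := le_antisymm le_top (le_trans htop (hmono m le_rfl))
  -- counting
  set SS : Finset (Sym2 (Fin N) → ℚ) := genF N ∪ G.edgeFinset.image (fun p => chi p) with hSS
  have hSSspan : Submodule.span ℚ (SS : Set (Sym2 (Fin N) → ℚ)) = ⊤ := by
    rw [← hfull, hEspan]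
    rw [hSS]
    push_cast [Finset.coe_union, Finset.coe_image, coe_edgeFinset]
    rw [Submodule.span_union, USub_def']
  have hrank : N.choose 2 + N ≤ SS.card := by
    have h1 : Module.finrank ℚ (Sym2 (Fin N) → ℚ) ≤ SS.card := by
      have h2 := finrank_span_le_card (R := ℚ) (SS : Set (Sym2 (Fin N) → ℚ))
      rw [hSSspan] at h2
      rw [finrank_top] at h2
      simpa using h2
    have h3 : Module.finrank ℚ (Sym2 (Fin N) → ℚ) = N.choose 2 + N := by
      rw [Module.finrank_pi]
      rw [Sym2.card]
      simp only [Fintype.card_fin]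
      rw [Nat.choose_succ_succ N 1, Nat.choose_one_right]
      change N + N.choose 2 = N.choose 2 + N
      omega
    omega
  have hcard : SS.card ≤ (3 * N - 1 + N) + G.edgeSet.ncard := by
    calc SS.card ≤ (genF N).card + (G.edgeFinset.image (fun p => chi p)).card :=
        Finset.card_union_le _ _
      _ ≤ (3 * N - 1 + N) + G.edgeSet.ncard := by
        gcongr
        · exact card_genF
        · calc (G.edgeFinset.image (fun p => chi p)).card ≤ G.edgeFinset.card :=
              Finset.card_image_le
            _ = G.edgeSet.ncard := by
              rw [← coe_edgeFinset, Set.ncard_coe_finset]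
  omega


end LinAlg


end WsatAux

namespace WsatAux
section Wheel

/-- vertex `a mod (s+t+2)` -/
def vx (s t : ℕ) (a : ℕ) : Fin (s+t+2) := ⟨a % (s+t+2), Nat.mod_lt _ (by omega)⟩

lemma vx_val {s t a : ℕ} (h : a < s+t+2) : (vx s t a).val = a := Nat.mod_eq_of_lt h

def wedge (s t : ℕ) (k : ℕ) : Sym2 (Fin (s+t+2)) :=
  if k < t+1 then s(vx s t (k+1), vx s t (k+2))
  else if k = t+1 then s(vx s t (t+2), vx s t 1)
  else s(vx s t 0, vx s t (k-(t+1)))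

def missing (s t : ℕ) (k : ℕ) : Set (Sym2 (Fin (s+t+2))) :=
  (wedge s t) '' (Set.Ico k (2*t+4))

def cg (s t : ℕ) (k : ℕ) : SimpleGraph (Fin (s+t+2)) :=
  fromEdgeSet ((⊤ : SimpleGraph (Fin (s+t+2))).edgeSet \ missing s t k)

lemma wedge_cases (s t : ℕ) (hs : 1 ≤ s) (k : ℕ) (hk : k < 2*t+4) :
    ∃ p q : Fin (s+t+2), wedge s t k = s(p,q) ∧
      ((k < t+1 ∧ p.val = k+1 ∧ q.val = k+2) ∨
       (k = t+1 ∧ p.val = t+2 ∧ q.val = 1) ∨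
       (t+2 ≤ k ∧ p.val = 0 ∧ q.val = k-(t+1) ∧ 1 ≤ k-(t+1) ∧ k-(t+1) ≤ t+2)) := by
  rw [wedge]
  split_ifs with h1 h2
  · exact ⟨_, _, rfl, Or.inl ⟨h1, vx_val (by omega), vx_val (by omega)⟩⟩
  · exact ⟨_, _, rfl, Or.inr (Or.inl ⟨h2, vx_val (by omega), vx_val (by omega)⟩)⟩
  · exact ⟨_, _, rfl, Or.inr (Or.inr ⟨by omega, vx_val (by omega), vx_val (by omega),
      by omega, by omega⟩)⟩

lemma missing_val {s t : ℕ} (hs : 1 ≤ s) {k : ℕ} {u v : Fin (s+t+2)} (h : s(u,v) ∈ missing s t k) :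
    ∃ j, k ≤ j ∧ j < 2*t+4 ∧
     ((j < t+1 ∧ ((u.val = j+1 ∧ v.val = j+2) ∨ (v.val = j+1 ∧ u.val = j+2))) ∨
      (j = t+1 ∧ ((u.val = t+2 ∧ v.val = 1) ∨ (v.val = t+2 ∧ u.val = 1))) ∨
      (t+2 ≤ j ∧ 1 ≤ j-(t+1) ∧ j-(t+1) ≤ t+2 ∧
        ((u.val = 0 ∧ v.val = j-(t+1)) ∨ (v.val = 0 ∧ u.val = j-(t+1))))) := by
  obtain ⟨j, ⟨hj1, hj2⟩, hw⟩ := h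
  obtain ⟨p, q, hpq, hc⟩ := wedge_cases s t hs j hj2
  rw [hpq] at hw
  rw [Sym2.eq_iff] at hw
  refine ⟨j, hj1, hj2, ?_⟩
  rcases hc with ⟨h1, hp, hq⟩ | ⟨h1, hp, hq⟩ | ⟨h1, hp, hq, h2, h3⟩ <;>
    rcases hw with ⟨rfl, rfl⟩ | ⟨rfl, rfl⟩
  · exact Or.inl ⟨h1, Or.inl ⟨hp, hq⟩⟩
  · exact Or.inl ⟨h1, Or.inr ⟨hp, hq⟩⟩
  · exact Or.inr (Or.inl ⟨h1, Or.inl ⟨hp, hq⟩⟩)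
  · exact Or.inr (Or.inl ⟨h1, Or.inr ⟨hp, hq⟩⟩)
  · exact Or.inr (Or.inr ⟨h1, h2, h3, Or.inl ⟨hp, hq⟩⟩)
  · exact Or.inr (Or.inr ⟨h1, h2, h3, Or.inr ⟨hp, hq⟩⟩)

lemma cg_adj {s t : ℕ} (k : ℕ) (u v : Fin (s+t+2)) :
    (cg s t k).Adj u v ↔ u ≠ v ∧ s(u,v) ∉ missing s t k := by
  rw [cg, fromEdgeSet_adj]
  constructor
  · rintro ⟨⟨h1, h2⟩, h3⟩
    exact ⟨h3, h2⟩
  · rintro ⟨h1, h2⟩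
    exact ⟨⟨by simpa using h1, h2⟩, h1⟩

lemma wedge_nondiag {s t : ℕ} (hs : 1 ≤ s) {k : ℕ} (hk : k < 2*t+4) :
    ¬ (wedge s t k).IsDiag := by
  obtain ⟨p, q, hpq, hc⟩ := wedge_cases s t hs k hk
  rw [hpq, Sym2.mk_isDiag_iff]
  intro hpq'
  have : p.val = q.val := congrArg Fin.val hpq'
  rcases hc with ⟨h1, hp, hq⟩ | ⟨h1, hp, hq⟩ | ⟨h1, hp, hq, h2, h3⟩ <;> omega

lemma wedge_inj {s t : ℕ} (hs : 1 ≤ s) (ht : 1 ≤ t) {j j' : ℕ}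
    (hj : j < 2*t+4) (hj' : j' < 2*t+4) (h : wedge s t j = wedge s t j') : j = j' := by
  obtain ⟨p, q, hpq, hc⟩ := wedge_cases s t hs j hj
  obtain ⟨p', q', hpq', hc'⟩ := wedge_cases s t hs j' hj'
  rw [hpq, hpq', Sym2.eq_iff] at h
  have h1 : (p.val = p'.val ∧ q.val = q'.val) ∨ (p.val = q'.val ∧ q.val = p'.val) := by
    rcases h with ⟨h1, h2⟩ | ⟨h1, h2⟩
    · exact Or.inl ⟨congrArg Fin.val h1, congrArg Fin.val h2⟩
    · exact Or.inr ⟨congrArg Fin.val h1, congrArg Fin.val h2⟩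
  rcases hc with ⟨e1, e2, e3⟩ | ⟨e1, e2, e3⟩ | ⟨e1, e2, e3, e4, e5⟩ <;>
    rcases hc' with ⟨f1, f2, f3⟩ | ⟨f1, f2, f3⟩ | ⟨f1, f2, f3, f4, f5⟩ <;>
    omega

lemma missing_succ {s t : ℕ} {k : ℕ} (hk : k < 2*t+4) :
    missing s t k = insert (wedge s t k) (missing s t (k+1)) := by
  rw [missing, missing]
  have : Set.Ico k (2*t+4) = insert k (Set.Ico (k+1) (2*t+4)) := by
    ext j
    simp only [Set.mem_Ico, Set.mem_insert_iff]
    omega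
  rw [this, Set.image_insert_eq]

lemma wedge_not_missing_succ {s t : ℕ} (hs : 1 ≤ s) (ht : 1 ≤ t) {k : ℕ} (hk : k < 2*t+4) :
    wedge s t k ∉ missing s t (k+1) := by
  rintro ⟨j, ⟨hj1, hj2⟩, hw⟩
  have := wedge_inj hs ht hj2 hk hw
  omega

lemma cg_edgeSet {s t : ℕ} (k : ℕ) :
    (cg s t k).edgeSet = (⊤ : SimpleGraph (Fin (s+t+2))).edgeSet \ missing s t k := by
  rw [cg, edgeSet_fromEdgeSet]
  ext e
  simp only [Set.mem_diff, Set.mem_setOf_eq, edgeSet_top]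
  tauto

lemma cg_edgeSet_succ {s t : ℕ} (hs : 1 ≤ s) (ht : 1 ≤ t) {k : ℕ} (hk : k < 2*t+4) :
    (cg s t (k+1)).edgeSet = insert (wedge s t k) ((cg s t k).edgeSet) := by
  rw [cg_edgeSet, cg_edgeSet, missing_succ hk]
  have h1 : wedge s t k ∈ (⊤ : SimpleGraph (Fin (s+t+2))).edgeSet := by
    rw [edgeSet_top]
    exact wedge_nondiag hs hk
  have h2 : wedge s t k ∉ missing s t (k+1) := wedge_not_missing_succ hs ht hk
  ext e
  simp only [Set.mem_diff, Set.mem_insert_iff]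
  by_cases he : e = wedge s t k
  · subst he; tauto
  · tauto

lemma wedge_mem_missing {s t : ℕ} {k k' : ℕ} (h1 : k' ≤ k) (h2 : k < 2*t+4) :
    wedge s t k ∈ missing s t k' := ⟨k, ⟨h1, h2⟩, rfl⟩

lemma cg_top (s t : ℕ) : cg s t (2*t+4) = ⊤ := by
  ext u v
  rw [cg_adj]
  simp only [top_adj]
  have : missing s t (2*t+4) = ∅ := by
    rw [missing]
    convert Set.image_empty _
    ext j
    simp only [Set.mem_Ico, Set.mem_empty_iff_false, iff_false]
    omega
  rw [this]
  simp

/-- helper to build an AddStep for the wheel process -/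
lemma mk_addstep {s t : ℕ} (hs : 1 ≤ s) (ht : 1 ≤ t) {k : ℕ} (hk : k < 2*t+4)
    (α : Fin s → Fin (s+t+2)) (β : Fin t → Fin (s+t+2))
    (hinjα : Function.Injective α) (hinjβ : Function.Injective β)
    (hadj : ∀ x y, (cg s t (k+1)).Adj (α x) (β y))
    (a0 : Fin s) (b0 : Fin t) (hw : s(α a0, β b0) = wedge s t k) :
    AddStep (completeBipartiteGraph (Fin s) (Fin t)) (cg s t k) (cg s t (k+1)) := by
  refine ⟨wedge s t k, ?_, cg_edgeSet_succ hs ht hk, ?_⟩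
  · rw [cg_edgeSet]
    rintro ⟨-, hmem⟩
    exact hmem (wedge_mem_missing le_rfl hk)
  · have hinj : Function.Injective (Sum.elim α β) := by
      rintro (x | y) (x' | y') h
      · rw [hinjα h]
      · exact absurd h (hadj x y').ne
      · exact absurd h.symm (hadj x' y).ne
      · rw [hinjβ h]
    refine ⟨⟨Sum.elim α β, hinj⟩, ?_, Sum.inl a0, Sum.inr b0, by simp, hw⟩
    rintro (x | y) (x' | y') hab
    · simp [completeBipartiteGraph] at hab
    · exact hadj x y'
    · exact (hadj x' y).symm
    · simp [completeBipartiteGraph] at hab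

lemma val_ite {s t : ℕ} (c : Prop) [Decidable c] {a b : ℕ} (ha : a < s+t+2) (hb : b < s+t+2) :
    ((if c then vx s t a else vx s t b) : Fin (s+t+2)).val = if c then a else b := by
  split_ifs
  · exact vx_val ha
  · exact vx_val hb

lemma addstep_path {s t : ℕ} (hs : 3 ≤ s) (ht : 3 ≤ t) {k : ℕ} (hk : k < t) :
    AddStep (completeBipartiteGraph (Fin s) (Fin t)) (cg s t k) (cg s t (k+1)) := by
  have hs1 : 1 ≤ s := by omega
  have ht1 : 1 ≤ t := by omega
  have hk4 : k < 2*t+4 := by omega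
  haveI : NeZero s := ⟨by omega⟩
  set α : Fin s → Fin (s+t+2) :=
    fun x => if x.val = 0 then vx s t (k+1) else vx s t (t+2+x.val) with hα
  set β : Fin t → Fin (s+t+2) :=
    fun y => if y.val < k then vx s t (y.val+1) else vx s t (y.val+2) with hβ
  have hαv : ∀ x : Fin s, (α x).val = if x.val = 0 then k+1 else t+2+x.val := by
    intro x
    have hx := x.isLt
    exact val_ite _ (by omega) (by omega)
  have hβv : ∀ y : Fin t, (β y).val = if y.val < k then y.val+1 else y.val+2 := by
    intro y
    have hy := y.isLt
    exact val_ite _ (by omega) (by omega)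
  refine mk_addstep hs1 ht1 hk4 α β ?_ ?_ ?_ 0 ⟨k, by omega⟩ ?_
  · intro x x' h
    have hx := x.isLt; have hx' := x'.isLt
    have hv := congrArg Fin.val h
    rw [hαv, hαv] at hv
    split_ifs at hv <;> exact Fin.ext (by omega)
  · intro y y' h
    have hy := y.isLt; have hy' := y'.isLt
    have hv := congrArg Fin.val h
    rw [hβv, hβv] at hv
    split_ifs at hv <;> exact Fin.ext (by omega)
  · intro x y
    rw [cg_adj]
    have hx := x.isLt; have hy := y.isLt
    have ha := hαv x; have hb := hβv y
    constructor
    · intro hc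
      have hv := congrArg Fin.val hc
      split_ifs at ha hb <;> omega
    · intro hmem
      obtain ⟨j, hj1, hj2, hcases⟩ := missing_val hs1 hmem
      split_ifs at ha hb <;>
        rcases hcases with ⟨w1, w2 | w2⟩ | ⟨w1, w2 | w2⟩ | ⟨w1, w2, w3, w4 | w4⟩ <;> omega
  · have h0 : (α 0).val = k+1 := by
      rw [hαv]
      simp
    have hb0 : (β ⟨k, by omega⟩).val = k+2 := by
      rw [hβv]
      simp
    have hw : wedge s t k = s(vx s t (k+1), vx s t (k+2)) := by
      rw [wedge, if_pos (by omega : k < t+1)]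
    have e1 : α 0 = vx s t (k+1) := Fin.ext (by rw [h0, vx_val (by omega)])
    have e2 : β ⟨k, by omega⟩ = vx s t (k+2) := Fin.ext (by rw [hb0, vx_val (by omega)])
    rw [hw, e1, e2]

lemma addstep_path_last {s t : ℕ} (hs : 3 ≤ s) (ht : 3 ≤ t) :
    AddStep (completeBipartiteGraph (Fin s) (Fin t)) (cg s t t) (cg s t (t+1)) := by
  have hs1 : 1 ≤ s := by omega
  have ht1 : 1 ≤ t := by omega
  have hk4 : t < 2*t+4 := by omega
  haveI : NeZero s := ⟨by omega⟩
  set α : Fin s → Fin (s+t+2) := fun x => vx s t (t+2+x.val) with hα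
  set β : Fin t → Fin (s+t+2) := fun y => vx s t (y.val+2) with hβ
  have hαv : ∀ x : Fin s, (α x).val = t+2+x.val := by
    intro x
    have hx := x.isLt
    exact vx_val (by omega)
  have hβv : ∀ y : Fin t, (β y).val = y.val+2 := by
    intro y
    have hy := y.isLt
    exact vx_val (by omega)
  refine mk_addstep hs1 ht1 hk4 α β ?_ ?_ ?_ 0 ⟨t-1, by omega⟩ ?_
  · intro x x' h
    have hv := congrArg Fin.val h
    rw [hαv, hαv] at hv
    exact Fin.ext (by omega)
  · intro y y' h
    have hv := congrArg Fin.val h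
    rw [hβv, hβv] at hv
    exact Fin.ext (by omega)
  · intro x y
    rw [cg_adj]
    have hx := x.isLt; have hy := y.isLt
    have ha := hαv x; have hb := hβv y
    constructor
    · intro hc
      have hv := congrArg Fin.val hc
      omega
    · intro hmem
      obtain ⟨j, hj1, hj2, hcases⟩ := missing_val hs1 hmem
      rcases hcases with ⟨w1, w2 | w2⟩ | ⟨w1, w2 | w2⟩ | ⟨w1, w2, w3, w4 | w4⟩ <;> omega
  · have h0 : (α 0).val = t+2 := by
      rw [hαv]
      simp
    have hb0 : (β ⟨t-1, by omega⟩).val = t+1 := by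
      rw [hβv]
      simp
      omega
    have hw : wedge s t t = s(vx s t (t+1), vx s t (t+2)) := by
      rw [wedge, if_pos (by omega : t < t+1)]
    have e1 : α 0 = vx s t (t+2) := Fin.ext (by rw [h0, vx_val (by omega)])
    have e2 : β ⟨t-1, by omega⟩ = vx s t (t+1) := Fin.ext (by rw [hb0, vx_val (by omega)])
    rw [hw, e1, e2]
    exact Sym2.eq_swap

lemma addstep_close {s t : ℕ} (hs : 3 ≤ s) (ht : 3 ≤ t) :
    AddStep (completeBipartiteGraph (Fin s) (Fin t)) (cg s t (t+1)) (cg s t (t+2)) := by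
  have hs1 : 1 ≤ s := by omega
  have ht1 : 1 ≤ t := by omega
  have hk4 : t+1 < 2*t+4 := by omega
  haveI : NeZero s := ⟨by omega⟩
  set α : Fin s → Fin (s+t+2) :=
    fun x => if x.val = 0 then vx s t 1 else if x.val = 1 then vx s t 3 else vx s t (t+2+x.val) with hα
  set β : Fin t → Fin (s+t+2) :=
    fun y => if y.val = 0 then vx s t 2 else vx s t (y.val+3) with hβ
  have hαv : ∀ x : Fin s, (α x).val = if x.val = 0 then 1 else if x.val = 1 then 3 else t+2+x.val := by
    intro x
    have hx := x.isLt
    simp only [hα]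
    split_ifs <;> exact vx_val (by omega)
  have hβv : ∀ y : Fin t, (β y).val = if y.val = 0 then 2 else y.val+3 := by
    intro y
    have hy := y.isLt
    simp only [hβ]
    split_ifs <;> exact vx_val (by omega)
  refine mk_addstep hs1 ht1 hk4 α β ?_ ?_ ?_ 0 ⟨t-1, by omega⟩ ?_
  · intro x x' h
    have hx := x.isLt; have hx' := x'.isLt
    have hv := congrArg Fin.val h
    rw [hαv, hαv] at hv
    split_ifs at hv <;> exact Fin.ext (by omega)
  · intro y y' h
    have hy := y.isLt; have hy' := y'.isLt
    have hv := congrArg Fin.val h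
    rw [hβv, hβv] at hv
    split_ifs at hv <;> exact Fin.ext (by omega)
  · intro x y
    rw [cg_adj]
    have hx := x.isLt; have hy := y.isLt
    have ha := hαv x; have hb := hβv y
    constructor
    · intro hc
      have hv := congrArg Fin.val hc
      split_ifs at ha hb <;> omega
    · intro hmem
      obtain ⟨j, hj1, hj2, hcases⟩ := missing_val hs1 hmem
      split_ifs at ha hb <;>
        rcases hcases with ⟨w1, w2 | w2⟩ | ⟨w1, w2 | w2⟩ | ⟨w1, w2, w3, w4 | w4⟩ <;> omega
  · have h0 : (α 0).val = 1 := by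
      rw [hαv]
      simp
    have hb0 : (β ⟨t-1, by omega⟩).val = t+2 := by
      rw [hβv]
      have hv : ((⟨t-1, by omega⟩ : Fin t)).val = t-1 := rfl
      rw [hv, if_neg (by omega)]
      omega
    have hw : wedge s t (t+1) = s(vx s t (t+2), vx s t 1) := by
      rw [wedge, if_neg (by omega : ¬ (t+1 < t+1)), if_pos rfl]
    have e1 : α 0 = vx s t 1 := Fin.ext (by rw [h0, vx_val (by omega)])
    have e2 : β ⟨t-1, by omega⟩ = vx s t (t+2) := Fin.ext (by rw [hb0, vx_val (by omega)])
    rw [hw, e1, e2]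
    exact Sym2.eq_swap

lemma addstep_spoke {s t : ℕ} (hs : 3 ≤ s) (ht : 3 ≤ t) {k : ℕ}
    (hk1 : t+2 ≤ k) (hk2 : k < 2*t+4) :
    AddStep (completeBipartiteGraph (Fin s) (Fin t)) (cg s t k) (cg s t (k+1)) := by
  have hs1 : 1 ≤ s := by omega
  have ht1 : 1 ≤ t := by omega
  haveI : NeZero s := ⟨by omega⟩
  haveI : NeZero t := ⟨by omega⟩
  set r : ℕ := k - (t+1) with hr
  have hr1 : 1 ≤ r := by omega
  have hr2 : r ≤ t+2 := by omega
  set α : Fin s → Fin (s+t+2) :=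
    fun x => if x.val = 0 then vx s t r else vx s t (t+2+x.val) with hα
  set β : Fin t → Fin (s+t+2) :=
    fun y => if y.val = 0 then vx s t 0 else if y.val < r then vx s t y.val else vx s t (y.val+1) with hβ
  have hαv : ∀ x : Fin s, (α x).val = if x.val = 0 then r else t+2+x.val := by
    intro x
    have hx := x.isLt
    simp only [hα]
    split_ifs <;> exact vx_val (by omega)
  have hβv : ∀ y : Fin t, (β y).val = if y.val = 0 then 0 else if y.val < r then y.val else y.val+1 := by
    intro y
    have hy := y.isLt
    simp only [hβ]
    split_ifs <;> exact vx_val (by omega)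
  refine mk_addstep hs1 ht1 hk2 α β ?_ ?_ ?_ 0 0 ?_
  · intro x x' h
    have hx := x.isLt; have hx' := x'.isLt
    have hv := congrArg Fin.val h
    rw [hαv, hαv] at hv
    split_ifs at hv <;> exact Fin.ext (by omega)
  · intro y y' h
    have hy := y.isLt; have hy' := y'.isLt
    have hv := congrArg Fin.val h
    rw [hβv, hβv] at hv
    split_ifs at hv <;> exact Fin.ext (by omega)
  · intro x y
    rw [cg_adj]
    have hx := x.isLt; have hy := y.isLt
    have ha := hαv x; have hb := hβv y
    constructor
    · intro hc
      have hv := congrArg Fin.val hc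
      split_ifs at ha hb <;> omega
    · intro hmem
      obtain ⟨j, hj1, hj2, hcases⟩ := missing_val hs1 hmem
      split_ifs at ha hb <;>
        rcases hcases with ⟨w1, w2 | w2⟩ | ⟨w1, w2 | w2⟩ | ⟨w1, w2, w3, w4 | w4⟩ <;> omega
  · have h0 : (α 0).val = r := by
      rw [hαv]
      simp
    have hb0 : (β 0).val = 0 := by
      rw [hβv]
      simp
    have hw : wedge s t k = s(vx s t 0, vx s t r) := by
      rw [wedge, if_neg (by omega : ¬ (k < t+1)), if_neg (by omega : ¬ (k = t+1))]
    have e1 : α 0 = vx s t r := Fin.ext (by rw [h0, vx_val (by omega)])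
    have e2 : β 0 = vx s t 0 := Fin.ext (by rw [hb0, vx_val (by omega)])
    rw [hw, e1, e2]
    exact Sym2.eq_swap

lemma addstep_all {s t : ℕ} (hs : 3 ≤ s) (ht : 3 ≤ t) {k : ℕ} (hk : k < 2*t+4) :
    AddStep (completeBipartiteGraph (Fin s) (Fin t)) (cg s t k) (cg s t (k+1)) := by
  rcases lt_or_ge k t with h | h
  · exact addstep_path hs ht h
  · rcases Nat.eq_or_lt_of_le h with h2 | h2
    · exact h2 ▸ addstep_path_last hs ht
    · rcases Nat.eq_or_lt_of_le h2 with h3 | h3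
      · exact h3 ▸ addstep_close hs ht
      · exact addstep_spoke hs ht (by omega) hk

section Ffree

variable {s t : ℕ}

lemma spoke_mem (hs : 1 ≤ s) {r : ℕ} (hr1 : 1 ≤ r) (hr2 : r ≤ t+2) :
    s(vx s t 0, vx s t r) ∈ missing s t 0 := by
  have hw : wedge s t (t+1+r) = s(vx s t 0, vx s t r) := by
    have harg : t+1+r-(t+1) = r := by omega
    rw [wedge, if_neg (by omega), if_neg (by omega), harg]
  rw [← hw]
  exact wedge_mem_missing (Nat.zero_le _) (by omega)

lemma rimedge_mem (hs : 1 ≤ s) {c : ℕ} (hc1 : 1 ≤ c) (hc2 : c+1 ≤ t+2) :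
    s(vx s t c, vx s t (c+1)) ∈ missing s t 0 := by
  have hw : wedge s t (c-1) = s(vx s t c, vx s t (c+1)) := by
    have h1 : c-1+1 = c := by omega
    have h2 : c-1+2 = c+1 := by omega
    rw [wedge, if_pos (by omega), h1, h2]
  rw [← hw]
  exact wedge_mem_missing (Nat.zero_le _) (by omega)

lemma wrapedge_mem (hs : 1 ≤ s) : s(vx s t (t+2), vx s t 1) ∈ missing s t 0 := by
  have hw : wedge s t (t+1) = s(vx s t (t+2), vx s t 1) := by
    rw [wedge, if_neg (by omega), if_pos rfl]
  rw [← hw]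
  exact wedge_mem_missing (Nat.zero_le _) (by omega)

lemma not_contains (hs : 3 ≤ s) (ht : 3 ≤ t) (hst : s ≤ t) :
    ¬ ContainsCopy (completeBipartiteGraph (Fin s) (Fin t)) (cg s t 0) := by
  rintro ⟨f, hf⟩
  classical
  have hs1 : 1 ≤ s := by omega
  have hcross : ∀ (x : Fin s) (y : Fin t),
      s(f (Sum.inl x), f (Sum.inr y)) ∉ missing s t 0 := by
    intro x y
    have := hf (Sum.inl x) (Sum.inr y) (by simp)
    rw [cg_adj] at this
    exact this.2
  set Af := Finset.image (fun x : Fin s => f (Sum.inl x)) Finset.univ with hAf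
  set Bf := Finset.image (fun y : Fin t => f (Sum.inr y)) Finset.univ with hBf
  have hnocross : ∀ u v, u ∈ Af → v ∈ Bf → s(u,v) ∈ missing s t 0 → False := by
    intro u v hu hv hm
    obtain ⟨x, -, hx⟩ := Finset.mem_image.mp hu
    obtain ⟨y, -, hy⟩ := Finset.mem_image.mp hv
    rw [← hx, ← hy] at hm
    exact hcross x y hm
  have hABdisj : ∀ v, v ∈ Af → v ∈ Bf → False := by
    intro v hvA hvB
    obtain ⟨x, -, hx⟩ := Finset.mem_image.mp hvA
    obtain ⟨y, -, hy⟩ := Finset.mem_image.mp hvB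
    exact Sum.inl_ne_inr (f.injective (hx.trans hy.symm))
  have hvxval : ∀ c : ℕ, c ≤ t+2 → (vx s t c).val = c := by
    intro c hc
    exact vx_val (by omega)
  -- the hub
  set h0 : Fin (s+t+2) := vx s t 0 with hh0
  have hh0val : h0.val = 0 := hvxval 0 (by omega)
  by_cases hhA : h0 ∈ Af
  · -- all of Bf avoids the rim, giving |Bf| ≤ s-1 < t
    have hBrim : ∀ y : Fin t, (f (Sum.inr y)).val = 0 ∨ t+3 ≤ (f (Sum.inr y)).val := by
      intro y
      by_contra hcon
      push_neg at hcon
      obtain ⟨h1, h2⟩ := hcon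
      set w := f (Sum.inr y) with hwdef
      have : s(h0, w) ∈ missing s t 0 := by
        have := spoke_mem (t := t) hs1 (r := w.val) (by omega) (by omega)
        have hww : vx s t (w.val) = w := Fin.ext (hvxval w.val (by omega))
        rwa [hww] at this
      obtain ⟨x0, -, hx0⟩ := Finset.mem_image.mp hhA
      rw [← hx0] at this
      exact hcross x0 y this
    have hBnot0 : ∀ y : Fin t, (f (Sum.inr y)).val ≠ 0 := by
      intro y hy0
      obtain ⟨x0, -, hx0⟩ := Finset.mem_image.mp hhA
      have : f (Sum.inr y) = f (Sum.inl x0) := by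
        apply Fin.ext
        rw [hy0, hx0, hh0val]
      exact Sum.inr_ne_inl (f.injective this)
    have hinj : Function.Injective
        (fun y : Fin t => (⟨(f (Sum.inr y)).val - (t+3), by
          have h1 := hBrim y
          have h2 := hBnot0 y
          have h3 := (f (Sum.inr y)).isLt
          omega⟩ : Fin (s-1))) := by
      intro y y' h
      have h1 := hBrim y; have h1' := hBrim y'
      have h2 := hBnot0 y; have h2' := hBnot0 y'
      have hv := congrArg Fin.val h
      simp only at hv
      have : (f (Sum.inr y)).val = (f (Sum.inr y')).val := by omega
      exact Sum.inr_injective (f.injective (Fin.ext this))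
    have := Fintype.card_le_of_injective _ hinj
    simp only [Fintype.card_fin] at this
    omega
  · by_cases hhB : h0 ∈ Bf
    · -- all of Af avoids the rim, giving |Af| ≤ s-1 < s
      have hArim : ∀ x : Fin s, (f (Sum.inl x)).val = 0 ∨ t+3 ≤ (f (Sum.inl x)).val := by
        intro x
        by_contra hcon
        push_neg at hcon
        obtain ⟨h1, h2⟩ := hcon
        set w := f (Sum.inl x) with hwdef
        have hm : s(h0, w) ∈ missing s t 0 := by
          have := spoke_mem (t := t) hs1 (r := w.val) (by omega) (by omega)
          have hww : vx s t (w.val) = w := Fin.ext (hvxval w.val (by omega))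
          rwa [hww] at this
        obtain ⟨y0, -, hy0⟩ := Finset.mem_image.mp hhB
        rw [← hy0] at hm
        rw [Sym2.eq_swap] at hm
        exact hcross x y0 hm
      have hAnot0 : ∀ x : Fin s, (f (Sum.inl x)).val ≠ 0 := by
        intro x hx0
        obtain ⟨y0, -, hy0⟩ := Finset.mem_image.mp hhB
        have : f (Sum.inl x) = f (Sum.inr y0) := by
          apply Fin.ext
          rw [hx0, hy0, hh0val]
        exact Sum.inl_ne_inr (f.injective this)
      have hinj : Function.Injective
          (fun x : Fin s => (⟨(f (Sum.inl x)).val - (t+3), by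
            have h1 := hArim x
            have h2 := hAnot0 x
            have h3 := (f (Sum.inl x)).isLt
            omega⟩ : Fin (s-1))) := by
        intro x x' h
        have h1 := hArim x; have h1' := hArim x'
        have h2 := hAnot0 x; have h2' := hAnot0 x'
        have hv := congrArg Fin.val h
        simp only at hv
        have : (f (Sum.inl x)).val = (f (Sum.inl x')).val := by omega
        exact Sum.inl_injective (f.injective (Fin.ext this))
      have := Fintype.card_le_of_injective _ hinj
      simp only [Fintype.card_fin] at this
      omega
    · -- hub outside the copy; identify the other missing vertex z
      have hAcard : Af.card = s := by
        rw [hAf, Finset.card_image_of_injective _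
          (fun x x' h => Sum.inl_injective (f.injective h) :
            Function.Injective (fun x : Fin s => f (Sum.inl x)))]
        simp
      have hBcard : Bf.card = t := by
        rw [hBf, Finset.card_image_of_injective _
          (fun y y' h => Sum.inr_injective (f.injective h) :
            Function.Injective (fun y : Fin t => f (Sum.inr y)))]
        simp
      have hPcard : ((Af ∪ Bf)ᶜ).card = 2 := by
        rw [Finset.card_compl, Finset.card_union_of_disjoint
          (Finset.disjoint_left.mpr (fun v hv hv' => hABdisj v hv hv')), hAcard, hBcard]
        simp only [Fintype.card_fin]
        omega
      obtain ⟨z1, z2, hz12ne, hzeq⟩ := Finset.card_eq_two.mp hPcard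
      have hh0C : h0 ∈ (Af ∪ Bf)ᶜ := by
        rw [Finset.mem_compl, Finset.mem_union]
        tauto
      have hz : ∃ z : Fin (s+t+2), z ≠ h0 ∧
          (∀ w : Fin (s+t+2), w ≠ h0 → w ≠ z → w ∈ Af ∨ w ∈ Bf) := by
        rw [hzeq] at hh0C
        simp only [Finset.mem_insert, Finset.mem_singleton] at hh0C
        rcases hh0C with rfl | rfl
        · refine ⟨z2, fun hc => hz12ne hc.symm, ?_⟩
          intro w hw1 hw2
          by_contra hcon
          push_neg at hcon
          have : w ∈ (Af ∪ Bf)ᶜ := by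
            rw [Finset.mem_compl, Finset.mem_union]
            tauto
          rw [hzeq] at this
          simp only [Finset.mem_insert, Finset.mem_singleton] at this
          tauto
        · refine ⟨z1, fun hc => hz12ne hc, ?_⟩
          intro w hw1 hw2
          by_contra hcon
          push_neg at hcon
          have : w ∈ (Af ∪ Bf)ᶜ := by
            rw [Finset.mem_compl, Finset.mem_union]
            tauto
          rw [hzeq] at this
          simp only [Finset.mem_insert, Finset.mem_singleton] at this
          tauto
      obtain ⟨z, hzne, htwo⟩ := hz
      -- rim vertices different from z are in Af ∪ Bf and consecutive ones are on the
      -- same side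
      have hrimne0 : ∀ c : ℕ, 1 ≤ c → c ≤ t+2 → vx s t c ≠ h0 := by
        intro c h1 h2 hc
        have := congrArg Fin.val hc
        rw [hvxval c h2, hh0val] at this
        omega
      have hstep : ∀ c : ℕ, 1 ≤ c → c+1 ≤ t+2 → vx s t c ≠ z → vx s t (c+1) ≠ z →
          (vx s t c ∈ Af ↔ vx s t (c+1) ∈ Af) := by
        intro c h1 h2 hz1 hz2
        have hm := rimedge_mem (t := t) hs1 h1 h2
        have hu := htwo _ (hrimne0 c h1 (by omega)) hz1
        have hv := htwo _ (hrimne0 (c+1) (by omega) h2) hz2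
        constructor
        · intro hA
          rcases hv with hA' | hB'
          · exact hA'
          · exact (hnocross _ _ hA hB' hm).elim
        · intro hA'
          rcases hu with hA | hB
          · exact hA
          · exfalso
            apply hnocross _ _ hA' hB
            rwa [Sym2.eq_swap] at hm
      have hwrap : vx s t (t+2) ≠ z → vx s t 1 ≠ z →
          (vx s t (t+2) ∈ Af ↔ vx s t 1 ∈ Af) := by
        intro hz1 hz2
        have hm := wrapedge_mem (t := t) (s := s) hs1
        have hu := htwo _ (hrimne0 (t+2) (by omega) (by omega)) hz1
        have hv := htwo _ (hrimne0 1 (by omega) (by omega)) hz2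
        constructor
        · intro hA
          rcases hv with hA' | hB'
          · exact hA'
          · exact (hnocross _ _ hA hB' hm).elim
        · intro hA'
          rcases hu with hA | hB
          · exact hA
          · exfalso
            apply hnocross _ _ hA' hB
            rwa [Sym2.eq_swap] at hm
      have hvne : ∀ c : ℕ, 1 ≤ c → c ≤ t+2 → c ≠ z.val → vx s t c ≠ z := by
        intro c h1 h2 h3 hc
        exact h3 (by rw [← hc, hvxval c h2])
      -- run lemma
      have hrun : ∀ m a : ℕ, 1 ≤ a → a+m ≤ t+2 → (∀ d, a ≤ d → d ≤ a+m → d ≠ z.val) →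
          (vx s t a ∈ Af ↔ vx s t (a+m) ∈ Af) := by
        intro m
        induction m with
        | zero => intro a _ _ _; rfl
        | succ m ih =>
          intro a h1 h2 h3
          have ihm := ih a h1 (by omega) (fun d hd1 hd2 => h3 d hd1 (by omega))
          rw [ihm]
          have := hstep (a+m) (by omega) (by omega)
            (hvne _ (by omega) (by omega) (h3 (a+m) (by omega) (by omega)))
            (hvne _ (by omega) (by omega) (h3 (a+m+1) (by omega) (by omega)))
          rw [show a+(m+1) = a+m+1 by omega]
          exact this
      -- all valid rim labels are on the same side as the anchor a0
      set a0 : ℕ := if z.val = 1 then 2 else 1 with ha0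
      have ha0p : 1 ≤ a0 ∧ a0 ≤ t+2 ∧ a0 ≠ z.val := by
        rw [ha0]; split_ifs <;> omega
      have hsame : ∀ c, 1 ≤ c → c ≤ t+2 → c ≠ z.val →
          (vx s t c ∈ Af ↔ vx s t a0 ∈ Af) := by
        intro c h1 h2 h3
        by_cases hz1 : z.val = 1
        · have ha0' : a0 = 2 := by rw [ha0, if_pos hz1]
          rw [ha0']
          have hc2 : 2 ≤ c := by omega
          have hiff := hrun (c-2) 2 (by omega) (by omega) (fun d hd1 hd2 => by omega)
          rw [show 2+(c-2) = c by omega] at hiff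
          exact hiff.symm
        · have ha0' : a0 = 1 := by rw [ha0, if_neg hz1]
          rw [ha0']
          by_cases hzrim : 1 ≤ z.val ∧ z.val ≤ t+2
          · by_cases hlow : c < z.val
            · have hiff := hrun (c-1) 1 (by omega) (by omega) (fun d hd1 hd2 => by omega)
              rw [show 1+(c-1) = c by omega] at hiff
              exact hiff.symm
            · have hup : z.val < c := by omega
              have hrun2 := hrun (t+2-c) c (by omega) (by omega) (fun d hd1 hd2 => by omega)
              rw [show c+(t+2-c) = t+2 by omega] at hrun2
              have hw := hwrap (hvne (t+2) (by omega) le_rfl (by omega))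
                (hvne 1 (by omega) (by omega) (by omega))
              rw [hrun2, hw]
          · have hiff := hrun (c-1) 1 (by omega) (by omega) (fun d hd1 hd2 => by omega)
            rw [show 1+(c-1) = c by omega] at hiff
            exact hiff.symm
      -- counting
      set T : Finset ℕ := (Finset.Icc 1 (t+2)).filter (fun c => c ≠ z.val) with hT
      have hTval : ∀ c ∈ T, 1 ≤ c ∧ c ≤ t+2 ∧ c ≠ z.val := by
        intro c hc
        rw [hT, Finset.mem_filter, Finset.mem_Icc] at hc
        exact ⟨hc.1.1, hc.1.2, hc.2⟩
      have hTcard : t+1 ≤ T.card := by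
        rw [hT, Finset.filter_ne']
        by_cases hm : z.val ∈ Finset.Icc 1 (t+2)
        · rw [Finset.card_erase_of_mem hm, Nat.card_Icc]
          omega
        · rw [Finset.erase_eq_of_notMem hm, Nat.card_Icc]
          omega
      have hinjOn : Set.InjOn (fun c => vx s t c) T := by
        intro c hc c' hc' h
        have h1 := hTval c hc
        have h2 := hTval c' hc'
        have := congrArg Fin.val h
        rwa [hvxval c h1.2.1, hvxval c' h2.2.1] at this
      have hcardim : (T.image (fun c => vx s t c)).card = T.card :=
        Finset.card_image_of_injOn hinjOn
      by_cases hside : vx s t a0 ∈ Af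
      · have hsub : T.image (fun c => vx s t c) ⊆ Af := by
          intro w hw
          obtain ⟨c, hcT, rfl⟩ := Finset.mem_image.mp hw
          obtain ⟨h1, h2, h3⟩ := hTval c hcT
          exact (hsame c h1 h2 h3).mpr hside
        have := Finset.card_le_card hsub
        rw [hcardim, hAcard] at this
        omega
      · have hsub : T.image (fun c => vx s t c) ⊆ Bf := by
          intro w hw
          obtain ⟨c, hcT, rfl⟩ := Finset.mem_image.mp hw
          obtain ⟨h1, h2, h3⟩ := hTval c hcT
          rcases htwo _ (hrimne0 c h1 h2) (hvne c h1 h2 h3) with hA | hB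
          · exact absurd ((hsame c h1 h2 h3).mp hA) hside
          · exact hB
        have := Finset.card_le_card hsub
        rw [hcardim, hBcard] at this
        omega

end Ffree

end Wheel

end WsatAux

/-- For `2 < s ≤ t`, `wsat(s+t+2, K_{s,t}) ≥ C(s+t+2,2) − 4(s+t) + 1`. -/
theorem wsat_Kst_lower_j2 (s t : ℕ) (hs : 2 < s) (hst : s ≤ t) :
    (wsat (s + t + 2) (completeBipartiteGraph (Fin s) (Fin t)) : ℤ) ≥
      ((s + t + 2).choose 2 : ℤ) - 4 * ((s : ℤ) + t) + 1 := by
  classical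
  have hs3 : 3 ≤ s := hs
  have ht3 : 3 ≤ t := le_trans hs3 hst
  haveI : NeZero (s+t+2) := ⟨by omega⟩
  have hne : {m | ∃ G : SimpleGraph (Fin (s+t+2)),
      IsWeaklySaturated (completeBipartiteGraph (Fin s) (Fin t)) G ∧
        G.edgeSet.ncard = m}.Nonempty := by
    refine ⟨(WsatAux.cg s t 0).edgeSet.ncard, WsatAux.cg s t 0,
      ⟨WsatAux.not_contains hs3 ht3 hst, 2*t+4, WsatAux.cg s t, rfl, WsatAux.cg_top s t,
        fun i hi => WsatAux.addstep_all hs3 ht3 hi⟩, rfl⟩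
  have hmem := Nat.sInf_mem hne
  obtain ⟨G, hG, hcard⟩ := hmem
  have hbound := WsatAux.member_bound (N := s+t+2) rfl G hG.2
  have hb2 : (s+t+2).choose 2 + 1 ≤ G.edgeSet.ncard + 3*(s+t+2) := by omega
  have hb3 : ((s+t+2).choose 2 : ℤ) + 1 ≤ (G.edgeSet.ncard : ℤ) + 3*(s+t+2) := by
    exact_mod_cast hb2
  have hw : wsat (s + t + 2) (completeBipartiteGraph (Fin s) (Fin t)) = G.edgeSet.ncard := by
    rw [wsat, hcard]
  rw [hw]
  have hst6 : (6 : ℤ) ≤ (s : ℤ) + t := by exact_mod_cast (by omega : 6 ≤ s + t)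
  push_cast at hb3 ⊢
  linarith
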